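/- Fix N ∈ ℕ, R > 0, λ > 0, T > 0 and g ∈ ℝ³ with |g| = 1, and set L := (2/5) R². Let U ⊆ (ℝ³)^N be open and let 𝓡 : U → ℝ^{6N×6N} be a C¹ map whose values are symmetric positive definite matrices; set 𝓡̃(Y) := M 𝓡(Y) M. Let X, V, Ω : [0,T] → (ℝ³)^N be C¹ with X(t) ∈ U for all t, Ẋ(t) = V(t), and (V̇(t), L Ω̇(t)) = λ ((ḡ, 0) − N 𝓡(X(t)) (V(t), Ω(t))) for all t ∈ [0,T]. Define (Ṽ(t), Ω̃(t)) := 𝓡(X(t))^{−1} (ḡ, 0) / N, let c := inf_{t∈[0,T]} min_{|A|₂=1} A · 𝓡̃(X(t)) A, and let G := sup_{t∈[0,T]} of the operator norm of the derivative at X(t) of the map Y ↦ 𝓡̃(Y)^{−1} (ḡ, 0) from (ℝ³)^N to ℝ^{6N} (both with Euclidean norms). Assume c > 0 and λ ≥ 2G/(N² c). Then for all t ∈ [0,T]: |(V − Ṽ, L^{1/2}(Ω − Ω̃))(t)|₂ ≤ |(V − Ṽ, L^{1/2}(Ω − Ω̃))(0)|₂ e^{−λNct/2} + (2√2 G / (λ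 N^{5/2} c²)) (1 − e^{−λNct/2}). -/

import Mathlib

open scoped RealInnerProductSpace

noncomputable section

/-- The space `(ℝ³)^N` of particle positions (or velocities). -/
abbrev PosSp (N : ℕ) := EuclideanSpace ℝ (Fin N × Fin 3)

/-- The space `ℝ^{6N}` of pairs `(W, Z)` of translational and angular velocities. -/
abbrev VSp (N : ℕ) := EuclideanSpace ℝ ((Fin N × Fin 3) ⊕ (Fin N × Fin 3))

/-- The pair `(W, Z) ∈ ℝ^{6N}` of two vectors `W, Z ∈ (ℝ³)^N`. -/
def pairVec {N : ℕ} (W Z : PosSp N) : VSp N :=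
  WithLp.toLp 2 (fun x => match x with
  | Sum.inl p => W p
  | Sum.inr p => Z p)

/-- The vector `(ḡ, 0) = (g, …, g, 0, …, 0) ∈ ℝ^{6N}`. -/
def gbar (N : ℕ) (g : EuclideanSpace ℝ (Fin 3)) : VSp N :=
  WithLp.toLp 2 (fun x => match x with
  | Sum.inl p => g p.2
  | Sum.inr _ => 0)

/-- The block-diagonal matrix `M` acting by `M (W, Z) = (W, L^{-1/2} Z)`. -/
def Mvec {N : ℕ} (L : ℝ) (v : VSp N) : VSp N :=
  WithLp.toLp 2 (fun x => match x with
  | Sum.inl p => v (Sum.inl p)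
  | Sum.inr p => (Real.sqrt L)⁻¹ * v (Sum.inr p))

namespace StmtAux

variable {N : ℕ} {L : ℝ}

lemma pairVec_inl {W Z : PosSp N} (p) : pairVec W Z (Sum.inl p) = W p := rfl
lemma pairVec_inr {W Z : PosSp N} (p) : pairVec W Z (Sum.inr p) = Z p := rfl

lemma pairVec_sub (W1 W2 Z1 Z2 : PosSp N) :
    pairVec (W1 - W2) (Z1 - Z2) = pairVec W1 Z1 - pairVec W2 Z2 := by
  ext x; cases x <;> rfl

lemma Mvec_add (u v : VSp N) : Mvec L (u + v) = Mvec L u + Mvec L v := by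
  ext x; cases x <;> simp [Mvec, mul_add]

lemma Mvec_smul (a : ℝ) (v : VSp N) : Mvec L (a • v) = a • Mvec L v := by
  ext x; cases x <;> simp [Mvec, mul_left_comm]

lemma Mvec_neg (v : VSp N) : Mvec L (-v) = -(Mvec L v) := by
  ext x; cases x <;> (simp [Mvec])

/-- `Mvec L` as a continuous linear map. -/
def MvecL (N : ℕ) (L : ℝ) : VSp N →L[ℝ] VSp N :=
  LinearMap.toContinuousLinearMap
    { toFun := Mvec L, map_add' := Mvec_add, map_smul' := Mvec_smul }

lemma MvecL_apply (v : VSp N) : MvecL N L v = Mvec L v := rfl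

lemma inner_pairVec (W1 Z1 W2 Z2 : PosSp N) :
    ⟪pairVec W1 Z1, pairVec W2 Z2⟫ = ⟪W1, W2⟫ + ⟪Z1, Z2⟫ := by
  simp only [PiLp.inner_apply, Fintype.sum_sum_type, pairVec_inl, pairVec_inr]

lemma norm_pairVec_sq (W Z : PosSp N) : ‖pairVec W Z‖ ^ 2 = ‖W‖ ^ 2 + ‖Z‖ ^ 2 := by
  rw [← real_inner_self_eq_norm_sq, ← real_inner_self_eq_norm_sq, ← real_inner_self_eq_norm_sq,
    inner_pairVec]

lemma norm_fst_le (W Z : PosSp N) : ‖W‖ ≤ ‖pairVec W Z‖ := by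
  have h := norm_pairVec_sq W Z
  nlinarith [norm_nonneg W, norm_nonneg Z, norm_nonneg (pairVec W Z), sq_nonneg ‖Z‖]

lemma inner_Mvec (u v : VSp N) : ⟪Mvec L u, v⟫ = ⟪u, Mvec L v⟫ := by
  simp only [PiLp.inner_apply, Fintype.sum_sum_type, Mvec]
  congr 1
  exact Finset.sum_congr rfl fun i _ => by simp [RCLike.inner_apply]; ring

lemma Mvec_gbar (g : EuclideanSpace ℝ (Fin 3)) : Mvec L (gbar N g) = gbar N g := by
  ext x; cases x <;> simp [Mvec, gbar]

lemma norm_gbar_sq (g : EuclideanSpace ℝ (Fin 3)) : ‖gbar N g‖ ^ 2 = N * ‖g‖ ^ 2 := by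
  rw [← real_inner_self_eq_norm_sq, ← real_inner_self_eq_norm_sq]
  simp only [PiLp.inner_apply, Fintype.sum_sum_type, gbar]
  simp [Fintype.sum_prod_type, Finset.sum_const, RCLike.inner_apply]

lemma Mvec_pairVec (hL : 0 < L) (W Z : PosSp N) :
    Mvec L (pairVec W (Real.sqrt L • Z)) = pairVec W Z := by
  have h : Real.sqrt L ≠ 0 := by positivity
  ext x; cases x
  · rfl
  · show (Real.sqrt L)⁻¹ * (Real.sqrt L • Z) _ = Z _
    simp [PiLp.smul_apply, h]

lemma Mvec_pairVec_L (hL : 0 < L) (W Z : PosSp N) :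
    Mvec L (pairVec W (L • Z)) = pairVec W (Real.sqrt L • Z) := by
  have h : Real.sqrt L ≠ 0 := by positivity
  ext x; cases x with
  | inl p => rfl
  | inr p =>
    have hLL : Real.sqrt L * Real.sqrt L = L := Real.mul_self_sqrt hL.le
    show (Real.sqrt L)⁻¹ * (L • Z) _ = (Real.sqrt L • Z) _
    simp only [PiLp.smul_apply, smul_eq_mul]
    field_simp
    linear_combination (-(Z p)) * hLL

lemma Mvec_inj (hL : 0 < L) : Function.Injective (Mvec (N := N) L) := by
  have h : Real.sqrt L ≠ 0 := by positivity
  intro u v huv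
  ext x
  cases x with
  | inl p => exact congrArg (fun w => w (Sum.inl p)) huv
  | inr p =>
    have h2 : (Real.sqrt L)⁻¹ * u (Sum.inr p) = (Real.sqrt L)⁻¹ * v (Sum.inr p) :=
      congrArg (fun w => w (Sum.inr p)) huv
    exact mul_left_cancel₀ (inv_ne_zero h) h2

lemma Mvec_zero : Mvec (N := N) L 0 = 0 := by
  ext x; cases x <;> simp [Mvec]

/-- Left injection as a continuous linear map. -/
def pairL (N : ℕ) : PosSp N →L[ℝ] VSp N :=
  LinearMap.toContinuousLinearMap
    { toFun := fun W => pairVec W 0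
      map_add' := fun a b => by ext x; cases x <;> simp [pairVec]
      map_smul' := fun a b => by ext x; cases x <;> simp [pairVec] }

/-- Right injection as a continuous linear map. -/
def pairR (N : ℕ) : PosSp N →L[ℝ] VSp N :=
  LinearMap.toContinuousLinearMap
    { toFun := fun Z => pairVec 0 Z
      map_add' := fun a b => by ext x; cases x <;> simp [pairVec]
      map_smul' := fun a b => by ext x; cases x <;> simp [pairVec] }

lemma pairVec_eq (W Z : PosSp N) : pairVec W Z = pairL N W + pairR N Z := by
  ext x
  cases x <;> simp [pairL, pairR, pairVec]

lemma isUnit_of_injective (B : VSp N →L[ℝ] VSp N) (h : Function.Injective B) :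
    IsUnit B := by
  have hsurj : Function.Surjective B.toLinearMap :=
    LinearMap.injective_iff_surjective.mp h
  let e : VSp N ≃ₗ[ℝ] VSp N := LinearEquiv.ofBijective B.toLinearMap ⟨h, hsurj⟩
  let e' : VSp N ≃L[ℝ] VSp N := e.toContinuousLinearEquiv
  have he : ((ContinuousLinearEquiv.unitsEquiv ℝ (VSp N)).symm e' : VSp N →L[ℝ] VSp N) = B := by
    ext v; rfl
  exact he ▸ ((ContinuousLinearEquiv.unitsEquiv ℝ (VSp N)).symm e').isUnit

lemma apply_ring_inverse (B : VSp N →L[ℝ] VSp N) (hB : IsUnit B) (v : VSp N) :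
    B (Ring.inverse B v) = v := by
  have h := Ring.mul_inverse_cancel B hB
  calc B (Ring.inverse B v) = (B * Ring.inverse B) v := rfl
    _ = v := by rw [h]; rfl

end StmtAux

open StmtAux

set_option maxHeartbeats 2000000 in
theorem stmt9 (N : ℕ) (R lam T : ℝ) (hR : 0 < R) (hlam : 0 < lam) (hT : 0 < T)
    (g : EuclideanSpace ℝ (Fin 3)) (hg : ‖g‖ = 1)
    (L : ℝ) (hL : L = (2 / 5) * R ^ 2)
    (U : Set (PosSp N)) (hU : IsOpen U)
    (𝓡 : PosSp N → (VSp N →L[ℝ] VSp N))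
    (h𝓡C1 : ContDiffOn ℝ 1 𝓡 U)
    (h𝓡sym : ∀ Y ∈ U, ∀ v w : VSp N, ⟪𝓡 Y v, w⟫ = ⟪v, 𝓡 Y w⟫)
    (h𝓡pos : ∀ Y ∈ U, ∀ v : VSp N, v ≠ 0 → 0 < ⟪v, 𝓡 Y v⟫)
    -- the trajectories `X, V, Ω` and Newton's equations
    (X V Ω V' Ω' : ℝ → PosSp N)
    (hXU : ∀ t ∈ Set.Icc (0 : ℝ) T, X t ∈ U)
    (hX : ∀ t ∈ Set.Icc (0 : ℝ) T, HasDerivWithinAt X (V t) (Set.Icc (0 : ℝ) T) t)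
    (hV : ∀ t ∈ Set.Icc (0 : ℝ) T, HasDerivWithinAt V (V' t) (Set.Icc (0 : ℝ) T) t)
    (hΩ : ∀ t ∈ Set.Icc (0 : ℝ) T, HasDerivWithinAt Ω (Ω' t) (Set.Icc (0 : ℝ) T) t)
    (hNewton : ∀ t ∈ Set.Icc (0 : ℝ) T,
      pairVec (V' t) (L • Ω' t) =
        lam • (gbar N g - (N : ℝ) • (𝓡 (X t) (pairVec (V t) (Ω t)))))
    -- the inertialess velocities `(Ṽ, Ω̃) = 𝓡(X)^{-1}(ḡ, 0)/N`
    (Vt Ωt : ℝ → PosSp N)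
    (hVt : ∀ t ∈ Set.Icc (0 : ℝ) T,
      𝓡 (X t) (pairVec (Vt t) (Ωt t)) = (N : ℝ)⁻¹ • gbar N g)
    -- the coercivity constant `c` of `𝓡̃` along the trajectory
    (c : ℝ)
    (hc_def : c = sInf {r : ℝ | ∃ t ∈ Set.Icc (0 : ℝ) T, ∃ A : VSp N,
      ‖A‖ = 1 ∧ r = ⟪A, Mvec L (𝓡 (X t) (Mvec L A))⟫})
    (hc_pos : 0 < c)
    -- `Φ(Y) = 𝓡̃(Y)^{-1} (ḡ, 0)` and the bound `G` on its derivative along the trajectory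
    (Φ : PosSp N → VSp N)
    (hΦ : ∀ Y ∈ U, Mvec L (𝓡 Y (Mvec L (Φ Y))) = gbar N g)
    (hΦdiff : ∀ t ∈ Set.Icc (0 : ℝ) T, DifferentiableAt ℝ Φ (X t))
    (G : ℝ)
    (hG_def : G = sSup {r : ℝ | ∃ t ∈ Set.Icc (0 : ℝ) T, r = ‖fderiv ℝ Φ (X t)‖})
    -- the smallness assumption on the inertia
    (hlam_large : lam ≥ 2 * G / ((N : ℝ) ^ 2 * c)) :
    ∀ t ∈ Set.Icc (0 : ℝ) T,
      ‖pairVec (V t - Vt t) (Real.sqrt L • (Ω t - Ωt t))‖ ≤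
        ‖pairVec (V 0 - Vt 0) (Real.sqrt L • (Ω 0 - Ωt 0))‖ *
            Real.exp (-(lam * N * c * t) / 2) +
          (2 * Real.sqrt 2 * G / (lam * (N : ℝ) ^ ((5 : ℝ) / 2) * c ^ 2)) *
            (1 - Real.exp (-(lam * N * c * t) / 2)) := by
  rcases Nat.eq_zero_or_pos N with rfl | hN1
  · -- `N = 0`: the defining set of `c` is empty, so `c = 0`, contradicting `c > 0`.
    exfalso
    have hemp : {r : ℝ | ∃ t ∈ Set.Icc (0 : ℝ) T, ∃ A : VSp 0,
        ‖A‖ = 1 ∧ r = ⟪A, Mvec L (𝓡 (X t) (Mvec L A))⟫} = ∅ := by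
      ext r
      simp only [Set.mem_setOf_eq, Set.mem_empty_iff_false, iff_false]
      rintro ⟨τ, hτ, A, hA, -⟩
      have hA0 : A = 0 := by
        ext x
        rcases x with p | p
        · exact p.1.elim0
        · exact p.1.elim0
      rw [hA0] at hA
      simp at hA
    rw [hc_def, hemp, Real.sInf_empty] at hc_pos
    exact lt_irrefl 0 hc_pos
  -- Main case `N ≥ 1`.
  have hNpos : (0 : ℝ) < N := by exact_mod_cast hN1
  have hNne : (N : ℝ) ≠ 0 := ne_of_gt hNpos
  have hLpos : 0 < L := by rw [hL]; positivity
  have hsL : (0 : ℝ) < Real.sqrt L := Real.sqrt_pos.mpr hLpos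
  set S := Set.Icc (0 : ℝ) T with hS_def
  have h0S : (0 : ℝ) ∈ S := ⟨le_refl 0, hT.le⟩
  -- injectivity of the resistance matrices
  have h𝓡inj : ∀ Y ∈ U, Function.Injective (𝓡 Y) := by
    intro Y hY u v huv
    by_contra hne
    have h1 : u - v ≠ 0 := sub_ne_zero.mpr hne
    have h2 := h𝓡pos Y hY (u - v) h1
    rw [map_sub, huv, sub_self, inner_zero_right] at h2
    exact lt_irrefl 0 h2
  -- the quadratic form bound from `c`
  have hbddBelow : BddBelow {r : ℝ | ∃ t ∈ Set.Icc (0 : ℝ) T, ∃ A : VSp N,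
      ‖A‖ = 1 ∧ r = ⟪A, Mvec L (𝓡 (X t) (Mvec L A))⟫} := by
    refine ⟨0, ?_⟩
    rintro r ⟨τ, hτ, A, hA, rfl⟩
    rw [← inner_Mvec]
    rcases eq_or_ne (Mvec L A) 0 with h0 | h0
    · rw [h0]; simp
    · exact (h𝓡pos _ (hXU τ hτ) _ h0).le
  have hcle : ∀ τ ∈ S, ∀ A : VSp N, ‖A‖ = 1 →
      c ≤ ⟪A, Mvec L (𝓡 (X τ) (Mvec L A))⟫ := by
    intro τ hτ A hA
    rw [hc_def]
    exact csInf_le hbddBelow ⟨τ, hτ, A, hA, rfl⟩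
  have hc_quad : ∀ τ ∈ S, ∀ w : VSp N,
      c * ‖w‖ ^ 2 ≤ ⟪w, Mvec L (𝓡 (X τ) (Mvec L w))⟫ := by
    intro τ hτ w
    rcases eq_or_ne w 0 with rfl | hw
    · simp [Mvec_zero]
    · have hn : 0 < ‖w‖ := norm_pos_iff.mpr hw
      have hA : ‖(‖w‖⁻¹ • w)‖ = 1 := norm_smul_inv_norm hw
      set Q : ℝ := ⟪w, Mvec L (𝓡 (X τ) (Mvec L w))⟫ with hQ_def
      have h1 := hcle τ hτ (‖w‖⁻¹ • w) hA
      rw [Mvec_smul, map_smul, Mvec_smul, real_inner_smul_left, real_inner_smul_right,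
        ← hQ_def] at h1
      have h4 : ‖w‖⁻¹ * (‖w‖⁻¹ * Q) * ‖w‖ ^ 2 = Q := by
        field_simp
      calc c * ‖w‖ ^ 2 ≤ ‖w‖⁻¹ * (‖w‖⁻¹ * Q) * ‖w‖ ^ 2 :=
            mul_le_mul_of_nonneg_right h1 (by positivity)
        _ = Q := h4
  -- norm of `gbar`
  have hgbar_norm : ‖gbar N g‖ = Real.sqrt N := by
    have h1 : ‖gbar N g‖ ^ 2 = (N : ℝ) := by rw [norm_gbar_sq, hg]; ring
    rw [← h1, Real.sqrt_sq (norm_nonneg _)]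
  -- bound on `Φ` along the trajectory
  have hΦnorm : ∀ τ ∈ S, ‖Φ (X τ)‖ ≤ Real.sqrt N / c := by
    intro τ hτ
    have h1 := hc_quad τ hτ (Φ (X τ))
    rw [hΦ _ (hXU τ hτ)] at h1
    have h2 : ⟪Φ (X τ), gbar N g⟫ ≤ ‖Φ (X τ)‖ * Real.sqrt N := by
      calc ⟪Φ (X τ), gbar N g⟫ ≤ ‖Φ (X τ)‖ * ‖gbar N g‖ := real_inner_le_norm _ _
        _ = ‖Φ (X τ)‖ * Real.sqrt N := by rw [hgbar_norm]
    rw [le_div_iff₀ hc_pos]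
    nlinarith [norm_nonneg (Φ (X τ)), Real.sqrt_nonneg (N : ℝ)]
  -- `𝓡̃` and `Ψ`, the explicit inverse formula
  set F : PosSp N → (VSp N →L[ℝ] VSp N) :=
    fun Y => (MvecL N L).comp ((𝓡 Y).comp (MvecL N L)) with hF_def
  have hF_apply : ∀ Y v, F Y v = Mvec L (𝓡 Y (Mvec L v)) := fun Y v => rfl
  have hFC1 : ContDiffOn ℝ 1 F U :=
    contDiffOn_const.clm_comp (h𝓡C1.clm_comp contDiffOn_const)
  have hFinj : ∀ Y ∈ U, Function.Injective (F Y) := by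
    intro Y hY u v huv
    have h0 : ∀ w : VSp N, F Y w = 0 → w = 0 := by
      intro w hw
      by_contra hwne
      have hMw : Mvec L w ≠ 0 := by
        intro h
        exact hwne (Mvec_inj hLpos (h.trans Mvec_zero.symm))
      have hpos := h𝓡pos Y hY (Mvec L w) hMw
      have h2 : ⟪Mvec L w, 𝓡 Y (Mvec L w)⟫ = 0 := by
        calc ⟪Mvec L w, 𝓡 Y (Mvec L w)⟫ = ⟪w, Mvec L (𝓡 Y (Mvec L w))⟫ := inner_Mvec _ _
          _ = ⟪w, F Y w⟫ := by rw [hF_apply]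
          _ = 0 := by rw [hw, inner_zero_right]
      rw [h2] at hpos
      exact lt_irrefl 0 hpos
    have := h0 (u - v) (by rw [map_sub, huv, sub_self])
    exact sub_eq_zero.mp this
  have hFunit : ∀ Y ∈ U, IsUnit (F Y) := fun Y hY => isUnit_of_injective _ (hFinj Y hY)
  set Ψ : PosSp N → VSp N := fun Y => Ring.inverse (F Y) (gbar N g) with hΨ_def
  have hΨC1 : ContDiffOn ℝ 1 Ψ U := by
    have hinvC1 : ContDiffOn ℝ 1 (fun Y => Ring.inverse (F Y)) U := by
      intro Y hY
      obtain ⟨u, hu⟩ := hFunit Y hY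
      have h1 : ContDiffAt ℝ 1 Ring.inverse (F Y) := hu ▸ contDiffAt_ringInverse ℝ u
      have h2 : ContDiffAt ℝ 1 F Y := (hFC1 Y hY).contDiffAt (hU.mem_nhds hY)
      exact (h1.comp Y h2).contDiffWithinAt
    exact hinvC1.clm_apply contDiffOn_const
  have hΦΨ : ∀ Y ∈ U, Φ Y = Ψ Y := by
    intro Y hY
    apply hFinj Y hY
    rw [hF_apply, hΦ Y hY]
    exact (apply_ring_inverse _ (hFunit Y hY) _).symm
  have hfderiv_eq : ∀ τ ∈ S, fderiv ℝ Φ (X τ) = fderiv ℝ Ψ (X τ) := by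
    intro τ hτ
    apply Filter.EventuallyEq.fderiv_eq
    exact Filter.eventually_of_mem (hU.mem_nhds (hXU τ hτ)) (fun Y hY => hΦΨ Y hY)
  -- `G` bounds the derivative of `Φ` along the trajectory
  have hXcont : ContinuousOn X S := fun τ hτ => (hX τ hτ).continuousWithinAt
  have hG_ge : ∀ τ ∈ S, ‖fderiv ℝ Φ (X τ)‖ ≤ G := by
    have hfdcont : ContinuousOn (fderiv ℝ Ψ) U :=
      hΨC1.continuousOn_fderiv_of_isOpen hU le_rfl
    have hcomp : ContinuousOn (fun τ => ‖fderiv ℝ Φ (X τ)‖) S := by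
      have h1 : ContinuousOn (fun τ => ‖fderiv ℝ Ψ (X τ)‖) S :=
        (hfdcont.comp hXcont (fun τ hτ => hXU τ hτ)).norm
      exact h1.congr (fun τ hτ => by rw [hfderiv_eq τ hτ])
    have hbdd : BddAbove ((fun τ => ‖fderiv ℝ Φ (X τ)‖) '' S) :=
      isCompact_Icc.bddAbove_image hcomp
    have hset : {r : ℝ | ∃ t ∈ Set.Icc (0 : ℝ) T, r = ‖fderiv ℝ Φ (X t)‖}
        = (fun τ => ‖fderiv ℝ Φ (X τ)‖) '' S := by
      ext r
      simp only [Set.mem_setOf_eq, Set.mem_image]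
      constructor
      · rintro ⟨τ, hτ, rfl⟩; exact ⟨τ, hτ, rfl⟩
      · rintro ⟨τ, hτ, rfl⟩; exact ⟨τ, hτ, rfl⟩
    intro τ hτ
    rw [hG_def, hset]
    exact le_csSup hbdd ⟨τ, hτ, rfl⟩
  have hG0 : 0 ≤ G := le_trans (norm_nonneg _) (hG_ge 0 h0S)
  -- the modulated quantity `y`
  set y : ℝ → VSp N := fun s => pairVec (V s) (Real.sqrt L • Ω s) - (N : ℝ)⁻¹ • Φ (X s)
    with hy_def
  set y' : ℝ → VSp N :=
    fun s => pairVec (V' s) (Real.sqrt L • Ω' s) - (N : ℝ)⁻¹ • (fderiv ℝ Φ (X s)) (V s)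
    with hy'_def
  clear_value y y'
  -- the key structural identities
  have hMΦ : ∀ τ ∈ S, Mvec L (Φ (X τ)) = (N : ℝ) • pairVec (Vt τ) (Ωt τ) := by
    intro τ hτ
    apply h𝓡inj _ (hXU τ hτ)
    apply Mvec_inj hLpos
    rw [hΦ _ (hXU τ hτ), map_smul, hVt τ hτ, smul_inv_smul₀ hNne, Mvec_gbar]
  have hΦpair : ∀ τ ∈ S, Φ (X τ) = (N : ℝ) • pairVec (Vt τ) (Real.sqrt L • Ωt τ) := by
    intro τ hτ
    apply Mvec_inj hLpos
    rw [hMΦ τ hτ, Mvec_smul, Mvec_pairVec hLpos]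
  have hykey : ∀ τ ∈ S, y τ = pairVec (V τ - Vt τ) (Real.sqrt L • (Ω τ - Ωt τ)) := by
    intro τ hτ
    rw [smul_sub, pairVec_sub]
    simp only [hy_def]
    rw [hΦpair τ hτ, inv_smul_smul₀ hNne]
  -- Newton's equation in modulated form
  have hgbar_eq : ∀ τ ∈ S, gbar N g = (N : ℝ) • 𝓡 (X τ) (pairVec (Vt τ) (Ωt τ)) := by
    intro τ hτ
    rw [hVt τ hτ, smul_inv_smul₀ hNne]
  have hy'eq : ∀ τ ∈ S, y' τ =
      -((lam * N) • Mvec L (𝓡 (X τ) (Mvec L (y τ)))) -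
        (N : ℝ)⁻¹ • (fderiv ℝ Φ (X τ)) (V τ) := by
    intro τ hτ
    have hMy : Mvec L (y τ) = pairVec (V τ) (Ω τ) - pairVec (Vt τ) (Ωt τ) := by
      rw [hykey τ hτ, Mvec_pairVec hLpos, pairVec_sub]
    have key : pairVec (V' τ) (Real.sqrt L • Ω' τ)
        = -((lam * N) • Mvec L (𝓡 (X τ) (Mvec L (y τ)))) := by
      rw [← Mvec_pairVec_L hLpos, hNewton τ hτ, hgbar_eq τ hτ, hMy, map_sub]
      have halg : lam • ((N : ℝ) • 𝓡 (X τ) (pairVec (Vt τ) (Ωt τ)) -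
            (N : ℝ) • 𝓡 (X τ) (pairVec (V τ) (Ω τ)))
          = -((lam * N) • (𝓡 (X τ) (pairVec (V τ) (Ω τ)) -
            𝓡 (X τ) (pairVec (Vt τ) (Ωt τ)))) := by
        module
      rw [halg, Mvec_neg, Mvec_smul]
    simp only [hy'_def]
    rw [key]
  -- constants
  set K : ℝ := lam * N * c / 2 with hK_def
  set b : ℝ := (N : ℝ)⁻¹ * (Real.sqrt N / c) with hb_def
  set eps : ℝ := (N : ℝ)⁻¹ * (G * b) with heps_def
  clear_value K b eps
  have hKpos : 0 < K := by rw [hK_def]; positivity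
  have hb0 : 0 ≤ b := by rw [hb_def]; positivity
  have heps0 : 0 ≤ eps := by rw [heps_def, hb_def]; positivity
  have hGN : G / N ≤ lam * N * c / 2 := by
    rw [ge_iff_le, div_le_iff₀ (by positivity : (0:ℝ) < (N : ℝ) ^ 2 * c)] at hlam_large
    rw [div_le_iff₀ hNpos]
    ring_nf at hlam_large ⊢
    linarith
  -- derivative of `y`
  have hyderiv : ∀ τ ∈ S, HasDerivWithinAt y (y' τ) S τ := by
    intro τ hτ
    have hl : HasDerivWithinAt (fun s => pairL N (V s)) (pairL N (V' τ)) S τ :=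
      (pairL N).hasFDerivAt.comp_hasDerivWithinAt τ (hV τ hτ)
    have hr : HasDerivWithinAt (fun s => pairR N (Real.sqrt L • Ω s))
        (pairR N (Real.sqrt L • Ω' τ)) S τ :=
      (pairR N).hasFDerivAt.comp_hasDerivWithinAt τ ((hΩ τ hτ).const_smul (Real.sqrt L))
    have h1 : HasDerivWithinAt (fun s => pairVec (V s) (Real.sqrt L • Ω s))
        (pairVec (V' τ) (Real.sqrt L • Ω' τ)) S τ := by
      simp only [pairVec_eq]
      exact hl.add hr
    have h2 : HasDerivWithinAt (fun s => Φ (X s)) ((fderiv ℝ Φ (X τ)) (V τ)) S τ :=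
      (hΦdiff τ hτ).hasFDerivAt.comp_hasDerivWithinAt τ (hX τ hτ)
    simp only [hy_def, hy'_def]
    exact h1.sub (h2.const_smul ((N : ℝ)⁻¹))
  have hycont : ContinuousOn y S := fun τ hτ => (hyderiv τ hτ).continuousWithinAt
  -- the inner-product inequality
  have hinner : ∀ τ ∈ S, ⟪y τ, y' τ⟫ ≤ -K * ‖y τ‖ ^ 2 + eps * ‖y τ‖ := by
    intro τ hτ
    set Q : ℝ := ⟪y τ, Mvec L (𝓡 (X τ) (Mvec L (y τ)))⟫ with hQ_def
    set P : ℝ := ⟪y τ, (fderiv ℝ Φ (X τ)) (V τ)⟫ with hP_def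
    clear_value Q P
    have ha0 : (0:ℝ) ≤ ‖y τ‖ := norm_nonneg _
    have h1 : ⟪y τ, y' τ⟫ = -((lam * N) * Q) - (N : ℝ)⁻¹ * P := by
      rw [hQ_def, hP_def, hy'eq τ hτ, inner_sub_right, inner_neg_right,
        real_inner_smul_right, real_inner_smul_right]
    have h2 : c * ‖y τ‖ ^ 2 ≤ Q := by
      rw [hQ_def]; exact hc_quad τ hτ (y τ)
    have hV_le : ‖V τ‖ ≤ ‖y τ‖ + (N : ℝ)⁻¹ * (Real.sqrt N / c) := by
      have hv1 : ‖V τ‖ ≤ ‖pairVec (V τ) (Real.sqrt L • Ω τ)‖ := norm_fst_le _ _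
      have hv2 : pairVec (V τ) (Real.sqrt L • Ω τ) = y τ + (N : ℝ)⁻¹ • Φ (X τ) := by
        simp only [hy_def]; abel
      have hv3 : ‖y τ + (N : ℝ)⁻¹ • Φ (X τ)‖ ≤ ‖y τ‖ + (N : ℝ)⁻¹ * (Real.sqrt N / c) := by
        refine le_trans (norm_add_le _ _) ?_
        have hnn : ‖(N : ℝ)⁻¹ • Φ (X τ)‖ = (N : ℝ)⁻¹ * ‖Φ (X τ)‖ := by
          rw [norm_smul, Real.norm_eq_abs, abs_of_pos (by positivity)]
        rw [hnn]
        have := hΦnorm τ hτ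
        gcongr
      rw [hv2] at hv1
      exact le_trans hv1 hv3
    have h3 : |P| ≤ ‖y τ‖ * (G * (‖y τ‖ + b)) := by
      rw [hP_def, hb_def]
      have hp1 : |⟪y τ, (fderiv ℝ Φ (X τ)) (V τ)⟫| ≤
          ‖y τ‖ * ‖(fderiv ℝ Φ (X τ)) (V τ)‖ := abs_real_inner_le_norm _ _
      have hp2 : ‖(fderiv ℝ Φ (X τ)) (V τ)‖ ≤
          G * (‖y τ‖ + (N : ℝ)⁻¹ * (Real.sqrt N / c)) := by
        refine le_trans ((fderiv ℝ Φ (X τ)).le_opNorm _) ?_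
        exact mul_le_mul (hG_ge τ hτ) hV_le (norm_nonneg _) hG0
      exact le_trans hp1 (mul_le_mul_of_nonneg_left hp2 ha0)
    have hlamN : (0:ℝ) < lam * N := by positivity
    have hNinv : (0:ℝ) < (N : ℝ)⁻¹ := by positivity
    rw [h1]
    have t1 : -((lam * N) * Q) ≤ -((lam * N) * (c * ‖y τ‖ ^ 2)) := by
      have := mul_le_mul_of_nonneg_left h2 hlamN.le
      linarith only [this]
    have t2 : -((N : ℝ)⁻¹ * P) ≤ (N : ℝ)⁻¹ * (‖y τ‖ * (G * (‖y τ‖ + b))) := by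
      have h5 : -P ≤ ‖y τ‖ * (G * (‖y τ‖ + b)) := by
        have h6 := neg_abs_le P
        linarith only [h3, h6]
      have := mul_le_mul_of_nonneg_left h5 hNinv.le
      linarith only [this]
    rw [hK_def, heps_def]
    have t3 : (N : ℝ)⁻¹ * (‖y τ‖ * (G * (‖y τ‖ + b))) =
        G / N * ‖y τ‖ ^ 2 + (N : ℝ)⁻¹ * (G * b) * ‖y τ‖ := by ring
    have t4 : G / N * ‖y τ‖ ^ 2 ≤ lam * (N:ℝ) * c / 2 * ‖y τ‖ ^ 2 :=
      mul_le_mul_of_nonneg_right hGN (sq_nonneg ‖y τ‖)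
    linarith only [t1, t2, t3, t4]
  -- the exponential decay estimate, via a regularised energy
  have key : ∀ t ∈ S, ‖y t‖ ≤ ‖y 0‖ * Real.exp (-(K * t)) +
      (eps / K) * (1 - Real.exp (-(K * t))) := by
    intro t ht
    have htpos : (0:ℝ) ≤ t := ht.1
    have hEpos : 0 < Real.exp (-(K * t)) := Real.exp_pos _
    have hE1 : Real.exp (-(K * t)) ≤ 1 :=
      Real.exp_le_one_iff.mpr (by linarith only [mul_nonneg hKpos.le htpos])
    refine le_of_forall_pos_le_add ?_
    intro η hη
    set δ : ℝ := η ^ 2 with hδ_def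
    have hδpos : 0 < δ := by positivity
    have hsδ : Real.sqrt δ = η := by rw [hδ_def, Real.sqrt_sq hη.le]
    set f : ℝ → ℝ := fun s => Real.sqrt (‖y s‖ ^ 2 + δ) with hf_def
    set C : ℝ := eps / K + Real.sqrt δ with hC_def
    have hf_pos : ∀ τ, 0 < f τ := fun τ => Real.sqrt_pos.mpr (by positivity)
    have hy_le_f : ∀ τ, ‖y τ‖ ≤ f τ := by
      intro τ
      calc ‖y τ‖ = Real.sqrt (‖y τ‖ ^ 2) := by rw [Real.sqrt_sq (norm_nonneg _)]
        _ ≤ Real.sqrt (‖y τ‖ ^ 2 + δ) := Real.sqrt_le_sqrt (by linarith)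
    have hsδ_le_f : ∀ τ, Real.sqrt δ ≤ f τ := fun τ =>
      Real.sqrt_le_sqrt (by linarith only [sq_nonneg ‖y τ‖])
    have hf_sq : ∀ τ, f τ ^ 2 = ‖y τ‖ ^ 2 + δ := fun τ => Real.sq_sqrt (by positivity)
    have hfderiv : ∀ τ ∈ S, HasDerivWithinAt f
        ((2 * ⟪y τ, y' τ⟫) / (2 * Real.sqrt (‖y τ‖ ^ 2 + δ))) S τ := by
      intro τ hτ
      have hu : HasDerivWithinAt (fun s => ‖y s‖ ^ 2 + δ) (2 * ⟪y τ, y' τ⟫) S τ := by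
        have h0 := (HasDerivWithinAt.inner ℝ (hyderiv τ hτ) (hyderiv τ hτ)).add_const δ
        have hfun : (fun s => ‖y s‖ ^ 2 + δ) = (fun s => (⟪y s, y s⟫ : ℝ) + δ) := by
          funext s; rw [real_inner_self_eq_norm_sq]
        rw [hfun]
        refine h0.congr_deriv ?_
        rw [real_inner_comm (y' τ) (y τ)]
        ring
      exact hu.sqrt (by positivity)
    have hfd_le : ∀ τ ∈ S, (2 * ⟪y τ, y' τ⟫) / (2 * Real.sqrt (‖y τ‖ ^ 2 + δ))
        ≤ -K * f τ + (eps + K * Real.sqrt δ) := by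
      intro τ hτ
      have hI := hinner τ hτ
      have h2f : (2 : ℝ) * Real.sqrt (‖y τ‖ ^ 2 + δ) = 2 * f τ := rfl
      rw [h2f, div_le_iff₀ (by linarith [hf_pos τ] : (0:ℝ) < 2 * f τ)]
      have p1 : eps * ‖y τ‖ ≤ eps * f τ := mul_le_mul_of_nonneg_left (hy_le_f τ) heps0
      have p2 : K * Real.sqrt δ * Real.sqrt δ ≤ K * Real.sqrt δ * f τ :=
        mul_le_mul_of_nonneg_left (hsδ_le_f τ)
          (mul_nonneg hKpos.le (Real.sqrt_nonneg δ))
      have p3 : K * f τ ^ 2 = K * ‖y τ‖ ^ 2 + K * δ := by rw [hf_sq τ]; ring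
      have p4 : K * (Real.sqrt δ * Real.sqrt δ) = K * δ := by
        rw [Real.mul_self_sqrt hδpos.le]
      linarith only [hI, p1, p2, p3, p4]
    clear_value δ f C
    -- the function `s ↦ e^{Ks}(f s - C)` is nonincreasing
    have hfcont : ContinuousOn f S := by
      rw [hf_def]
      exact Real.continuous_sqrt.comp_continuousOn
        ((hycont.norm.pow 2).add continuousOn_const)
    have hggcont : ContinuousOn (fun s => Real.exp (K * s) * (f s - C)) S :=
      ((Real.continuous_exp.comp (continuous_const.mul continuous_id)).continuousOn).mul
        (hfcont.sub continuousOn_const)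
    have hgg' : ∀ x ∈ Set.Ioo (0:ℝ) T, HasDerivAt (fun s => Real.exp (K * s) * (f s - C))
        ((K * Real.exp (K * x)) * (f x - C) + Real.exp (K * x) *
          ((2 * ⟪y x, y' x⟫) / (2 * Real.sqrt (‖y x‖ ^ 2 + δ)))) x := by
      intro x hx
      have hxS : x ∈ S := Set.Ioo_subset_Icc_self hx
      have h1 : HasDerivAt (fun s => Real.exp (K * s)) (K * Real.exp (K * x)) x := by
        have h0 := (Real.hasDerivAt_exp (K * x)).comp x ((hasDerivAt_id x).const_mul K)
        refine h0.congr_deriv ?_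
        ring
      have h2' : HasDerivAt f ((2 * ⟪y x, y' x⟫) / (2 * Real.sqrt (‖y x‖ ^ 2 + δ))) x :=
        (hfderiv x hxS).hasDerivAt (by rw [hS_def]; exact Icc_mem_nhds hx.1 hx.2)
      exact h1.mul (h2'.sub_const C)
    have hmono : AntitoneOn (fun s => Real.exp (K * s) * (f s - C)) S := by
      rw [hS_def]
      apply antitoneOn_of_deriv_nonpos (convex_Icc 0 T)
      · rw [← hS_def]; exact hggcont
      · intro x hx
        rw [interior_Icc] at hx
        exact (hgg' x hx).differentiableAt.differentiableWithinAt
      · intro x hx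
        rw [interior_Icc] at hx
        rw [(hgg' x hx).deriv]
        have hxS : x ∈ S := Set.Ioo_subset_Icc_self hx
        have hb1 := hfd_le x hxS
        have hKC : K * C = eps + K * Real.sqrt δ := by
          rw [hC_def, mul_add, mul_comm K (eps / K), div_mul_cancel₀ _ hKpos.ne']
        have hfac : K * (f x - C) +
            (2 * ⟪y x, y' x⟫) / (2 * Real.sqrt (‖y x‖ ^ 2 + δ)) ≤ 0 := by
          linarith only [hb1, hKC]
        have hprod := mul_le_mul_of_nonneg_left hfac (Real.exp_pos (K * x)).le
        linarith only [hprod]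
    have hcomp : Real.exp (K * t) * (f t - C) ≤ Real.exp (K * 0) * (f 0 - C) :=
      hmono h0S ht htpos
    rw [mul_zero, Real.exp_zero, one_mul] at hcomp
    have hEE : Real.exp (K * t) * Real.exp (-(K * t)) = 1 := by
      rw [← Real.exp_add]; simp
    have hft : f t ≤ (f 0 - C) * Real.exp (-(K * t)) + C := by
      have hq := mul_le_mul_of_nonneg_right hcomp hEpos.le
      have hq2 : Real.exp (K * t) * (f t - C) * Real.exp (-(K * t)) = f t - C := by
        rw [mul_right_comm, hEE, one_mul]
      linarith only [hq, hq2]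
    have hf0 : f 0 ≤ ‖y 0‖ + Real.sqrt δ := by
      simp only [hf_def]
      have h1 : ‖y 0‖ ^ 2 + δ ≤ (‖y 0‖ + Real.sqrt δ) ^ 2 := by
        nlinarith only [Real.mul_self_sqrt hδpos.le, Real.sqrt_nonneg δ, norm_nonneg (y 0)]
      calc Real.sqrt (‖y 0‖ ^ 2 + δ) ≤ Real.sqrt ((‖y 0‖ + Real.sqrt δ) ^ 2) :=
            Real.sqrt_le_sqrt h1
        _ = ‖y 0‖ + Real.sqrt δ :=
            Real.sqrt_sq (by positivity)
    have h2 : ‖y t‖ ≤ f t := hy_le_f t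
    have hC' : C = eps / K + η := by rw [hC_def, hsδ]
    have q1 := mul_le_mul_of_nonneg_right hf0 hEpos.le
    have q2 : C * Real.exp (-(K * t)) = (eps / K) * Real.exp (-(K * t)) +
        η * Real.exp (-(K * t)) := by rw [hC']; ring
    have q3 : Real.sqrt δ * Real.exp (-(K * t)) = η * Real.exp (-(K * t)) := by
      rw [hsδ]
    linarith only [h2, hft, q1, q2, q3, hC']
  -- final assembly
  intro t ht
  have hkey := key t ht
  have hy0 : ‖y 0‖ = ‖pairVec (V 0 - Vt 0) (Real.sqrt L • (Ω 0 - Ωt 0))‖ := by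
    rw [hykey 0 h0S]
  have hyt : ‖pairVec (V t - Vt t) (Real.sqrt L • (Ω t - Ωt t))‖ = ‖y t‖ := by
    rw [hykey t ht]
  rw [hyt, ← hy0]
  have harg : -(lam * (N:ℝ) * c * t) / 2 = -(K * t) := by rw [hK_def]; ring
  rw [harg]
  have hE1 : Real.exp (-(K * t)) ≤ 1 :=
    Real.exp_le_one_iff.mpr (by linarith only [mul_nonneg hKpos.le ht.1])
  have hEpos : 0 < Real.exp (-(K * t)) := Real.exp_pos _
  -- comparison of the constants
  have hsqN : Real.sqrt N * Real.sqrt N = (N:ℝ) := Real.mul_self_sqrt hNpos.le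
  have hsqNpos : 0 < Real.sqrt N := Real.sqrt_pos.mpr hNpos
  have hs2 : (1:ℝ) ≤ Real.sqrt 2 := by
    rw [show (1:ℝ) = Real.sqrt 1 by simp]
    exact Real.sqrt_le_sqrt (by norm_num)
  have hrpow : ((N : ℝ)) ^ ((5 : ℝ) / 2) = (N : ℝ) ^ 2 * Real.sqrt N := by
    rw [show (5:ℝ)/2 = ((2:ℕ) : ℝ) + 1/2 by norm_num, Real.rpow_add hNpos,
      Real.rpow_natCast, ← Real.sqrt_eq_rpow]
  have hDpos : (0:ℝ) < lam * ((N : ℝ) ^ 2 * Real.sqrt N) * c ^ 2 := by positivity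
  have hLHS : eps * (lam * ((N : ℝ) ^ 2 * Real.sqrt N) * c ^ 2)
      = G * lam * (Real.sqrt N * Real.sqrt N) * c := by
    rw [heps_def, hb_def]
    field_simp
  rw [hsqN] at hLHS
  have hconst : eps / K ≤ 2 * Real.sqrt 2 * G / (lam * (N : ℝ) ^ ((5 : ℝ) / 2) * c ^ 2) := by
    rw [hrpow, div_le_div_iff₀ hKpos hDpos, hLHS, hK_def]
    have q := mul_nonneg (mul_nonneg (mul_nonneg (sub_nonneg.mpr hs2) hG0) hlam.le)
      (mul_pos hNpos hc_pos).le
    linarith only [q]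
  have hq := mul_le_mul_of_nonneg_right hconst
    (by linarith : (0:ℝ) ≤ 1 - Real.exp (-(K * t)))
  linarith only [hkey, hq]

end
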